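/- Convergence of posterior parameters: fix σ > 0, ξ > 0, ξ₂ > 0 and δ, δ₂ : ℝ. For every ε > 0 and every C > 0 there exists N : ℕ such that for all natural numbers n > N and all S : ℝ with |S| ≤ C·n, both |(S·ξ² + δ·σ²)/(n·ξ² + σ²) − (S·ξ₂² + δ₂·σ²)/(n·ξ₂² + σ²)| < ε and |Real.log ((n·ξ²·ξ₂² + ξ²·σ²)/(n·ξ²·ξ₂² + ξ₂²·σ²))| < ε. -/

import Mathlib

open Filter

theorem gaussian_posterior_parameters_convergence
    (σ ξ ξ₂ : ℝ) (hσ : 0 < σ) (hξ : 0 < ξ) (hξ₂ : 0 < ξ₂) (δ δ₂ : ℝ) :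
    ∀ ε : ℝ, 0 < ε → ∀ C : ℝ, 0 < C → ∃ N : ℕ, ∀ n : ℕ, N < n → ∀ S : ℝ, |S| ≤ C * n →
      |(S * ξ ^ 2 + δ * σ ^ 2) / ((n : ℝ) * ξ ^ 2 + σ ^ 2) -
        (S * ξ₂ ^ 2 + δ₂ * σ ^ 2) / ((n : ℝ) * ξ₂ ^ 2 + σ ^ 2)| < ε ∧
      |Real.log (((n : ℝ) * ξ ^ 2 * ξ₂ ^ 2 + ξ ^ 2 * σ ^ 2) /
        ((n : ℝ) * ξ ^ 2 * ξ₂ ^ 2 + ξ₂ ^ 2 * σ ^ 2))| < ε := by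
  intro ε hε C hC
  have ha : (0:ℝ) < ξ ^ 2 := by positivity
  have hb : (0:ℝ) < ξ₂ ^ 2 := by positivity
  have hs : (0:ℝ) < σ ^ 2 := by positivity
  set a := ξ ^ 2
  set b := ξ₂ ^ 2
  set s := σ ^ 2
  -- log part : ratio tends to 1
  have hratio : Tendsto (fun n : ℕ => ((n : ℝ) * a * b + a * s) / ((n : ℝ) * a * b + b * s))
      atTop (nhds 1) := by
    have h0 : Tendsto (fun n : ℕ => (1:ℝ)/(n:ℝ)) atTop (nhds 0) :=
      tendsto_one_div_atTop_nhds_zero_nat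
    have hnum : Tendsto (fun n : ℕ => a * b + a * s * ((1:ℝ)/(n:ℝ))) atTop
        (nhds (a * b + a * s * 0)) :=
      tendsto_const_nhds.add (h0.const_mul (a * s))
    have hden : Tendsto (fun n : ℕ => a * b + b * s * ((1:ℝ)/(n:ℝ))) atTop
        (nhds (a * b + b * s * 0)) :=
      tendsto_const_nhds.add (h0.const_mul (b * s))
    have hlim : Tendsto (fun n : ℕ =>
        (a * b + a * s * ((1:ℝ)/(n:ℝ))) / (a * b + b * s * ((1:ℝ)/(n:ℝ)))) atTop
        (nhds ((a * b + a * s * 0) / (a * b + b * s * 0))) := by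
      exact hnum.div hden (by simp only [mul_zero, add_zero]; positivity)
    have heq : ((a * b + a * s * 0) / (a * b + b * s * 0)) = 1 := by
      field_simp
      ring
    rw [heq] at hlim
    refine hlim.congr' ?_
    filter_upwards [eventually_ge_atTop 1] with n hn
    have hn0 : (n:ℝ) ≠ 0 := by positivity
    have hd1 : (n:ℝ) * a * b + b * s ≠ 0 := by positivity
    have hd2 : a * b + b * s * ((1:ℝ)/(n:ℝ)) > 0 := by positivity
    field_simp
  have hlog : Tendsto (fun n : ℕ => Real.log (((n : ℝ) * a * b + a * s) /
      ((n : ℝ) * a * b + b * s))) atTop (nhds 0) := by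
    have := hratio.log one_ne_zero
    rwa [Real.log_one] at this
  obtain ⟨N₂, hN₂⟩ := (Metric.tendsto_atTop.mp hlog) ε hε
  -- first part constant
  set K := s * (C * |a - b| + |δ * b - δ₂ * a| + s * |δ - δ₂|) with hK_def
  have hK0 : 0 ≤ K := by positivity
  obtain ⟨N₁, hN₁⟩ := exists_nat_gt (K / (a * b * ε))
  refine ⟨max N₁ N₂, fun n hn S hS => ?_⟩
  have hn1 : 1 ≤ n := lt_of_le_of_lt (Nat.zero_le _) hn
  have hnn : (1:ℝ) ≤ (n:ℝ) := by exact_mod_cast hn1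
  have hnN₁ : (N₁:ℝ) < (n:ℝ) := by exact_mod_cast lt_of_le_of_lt (le_max_left _ _) hn
  have hnN₂ : N₂ ≤ n := le_of_lt (lt_of_le_of_lt (le_max_right _ _) hn)
  have hKlt : K < (n:ℝ) * (a * b * ε) := by
    have : K / (a * b * ε) < (n:ℝ) := lt_trans (hN₁) hnN₁
    have habe : 0 < a * b * ε := by positivity
    calc K = K / (a * b * ε) * (a * b * ε) := by field_simp
    _ < (n:ℝ) * (a * b * ε) := by
        exact mul_lt_mul_of_pos_right this habe
  constructor
  · have hd1 : (0:ℝ) < (n:ℝ) * a + s := by positivity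
    have hd2 : (0:ℝ) < (n:ℝ) * b + s := by positivity
    have key : (S * a + δ * s) / ((n : ℝ) * a + s) - (S * b + δ₂ * s) / ((n : ℝ) * b + s)
        = (s * (S * (a - b) + (n:ℝ) * (δ * b - δ₂ * a) + s * (δ - δ₂)))
          / (((n:ℝ) * a + s) * ((n:ℝ) * b + s)) := by
      field_simp
      ring
    rw [key, abs_div, abs_of_pos (by positivity : (0:ℝ) < ((n:ℝ) * a + s) * ((n:ℝ) * b + s))]
    rw [div_lt_iff₀ (by positivity)]
    have hnum_le : |s * (S * (a - b) + (n:ℝ) * (δ * b - δ₂ * a) + s * (δ - δ₂))|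
        ≤ (n:ℝ) * K := by
      rw [abs_mul, abs_of_pos hs]
      have h1 : |S * (a - b) + (n:ℝ) * (δ * b - δ₂ * a) + s * (δ - δ₂)|
          ≤ |S| * |a - b| + (n:ℝ) * |δ * b - δ₂ * a| + s * |δ - δ₂| := by
        calc _ ≤ |S * (a - b) + (n:ℝ) * (δ * b - δ₂ * a)| + |s * (δ - δ₂)| := abs_add_le _ _
        _ ≤ |S * (a - b)| + |(n:ℝ) * (δ * b - δ₂ * a)| + |s * (δ - δ₂)| := by
            gcongr; exact abs_add_le _ _
        _ = |S| * |a - b| + (n:ℝ) * |δ * b - δ₂ * a| + s * |δ - δ₂| := by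
            rw [abs_mul, abs_mul, abs_mul, abs_of_nonneg (by linarith : (0:ℝ) ≤ (n:ℝ)),
              abs_of_pos hs]
      have h2 : |S| * |a - b| + (n:ℝ) * |δ * b - δ₂ * a| + s * |δ - δ₂|
          ≤ (n:ℝ) * (C * |a - b| + |δ * b - δ₂ * a| + s * |δ - δ₂|) := by
        have : |S| * |a - b| ≤ C * (n:ℝ) * |a - b| := by
          exact mul_le_mul_of_nonneg_right hS (abs_nonneg _)
        nlinarith [this, hnn, abs_nonneg (δ * b - δ₂ * a), abs_nonneg (δ - δ₂),
          mul_nonneg (by linarith : (0:ℝ) ≤ (n:ℝ) - 1)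
            (mul_nonneg hs.le (abs_nonneg (δ - δ₂)))]
      calc s * |S * (a - b) + (n:ℝ) * (δ * b - δ₂ * a) + s * (δ - δ₂)|
          ≤ s * ((n:ℝ) * (C * |a - b| + |δ * b - δ₂ * a| + s * |δ - δ₂|)) := by
            exact mul_le_mul_of_nonneg_left (le_trans h1 h2) hs.le
        _ = (n:ℝ) * K := by rw [hK_def]; ring
    have hfin : (n:ℝ) * K < ε * (((n:ℝ) * a + s) * ((n:ℝ) * b + s)) := by
      have h3 : (n:ℝ) * K < (n:ℝ) * ((n:ℝ) * (a * b * ε)) := by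
        have hn0 : (0:ℝ) < (n:ℝ) := by linarith
        exact mul_lt_mul_of_pos_left hKlt hn0
      nlinarith [h3, mul_nonneg (mul_nonneg hε.le hs.le)
        (by positivity : (0:ℝ) ≤ (n:ℝ) * a + (n:ℝ) * b + s)]
    linarith [lt_of_le_of_lt hnum_le hfin]
  · have := hN₂ n hnN₂
    rw [Real.dist_eq, sub_zero] at this
    convert this using 4
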